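/- The exponential generating series of parking functions, F(t) = Σ_{n≥0} (n+1)^(n-1) · t^n/n! (with the n = 0 term equal to 1), satisfies the functional equation F(t) = exp(t·F(t)) in the ring of formal power series ℚ[[t]]. -/

import Mathlib

section AbelIdentity
open Polynomial Finset

lemma eq_of_deriv_eq {p q : ℚ[X]} (h : derivative p = derivative q) (c : ℚ)
    (he : p.eval c = q.eval c) : p = q := by
  have h0 : derivative (p - q) = 0 := by rw [derivative_sub, h, sub_self]
  have := eq_C_of_derivative_eq_zero h0
  have hc : (p - q).coeff 0 = 0 := by
    have := congrArg (fun r => Polynomial.eval c r) this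
    simpa [he] using this.symm
  have : p - q = 0 := by rw [this, hc, map_zero]
  exact sub_eq_zero.mp this


lemma comp_X_add_C_ne_zero {p : ℚ[X]} (hp : p ≠ 0) : p.comp (X + C 1) ≠ 0 := by
  intro h
  apply hp
  have := congrArg (fun q => q.comp (X - C 1)) h
  simpa [comp_assoc] using this

lemma findiff : ∀ (n : ℕ) (p : ℚ[X]), p.degree < n →
    ∑ k ∈ range (n+1), (-1:ℚ)^k * (n.choose k) * p.eval (k:ℚ) = 0 := by
  intro n
  induction n with
  | zero =>
    intro p hp
    have : p = 0 := by
      rw [← degree_eq_bot]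
      exact Nat.WithBot.lt_zero_iff.mp (by exact_mod_cast hp)
    simp [this]
  | succ n ih =>
    intro p hp
    set q : ℚ[X] := p - p.comp (X + C 1) with hq
    have hqdeg : q.degree < n := by
      rcases eq_or_ne p 0 with rfl | hp0
      · simpa [hq] using (by exact WithBot.bot_lt_coe n : (⊥ : WithBot ℕ) < n)
      · have hc0 : p.comp (X + C 1) ≠ 0 := comp_X_add_C_ne_zero hp0
        have hdeg : p.degree = (p.comp (X + C 1)).degree := by
          rw [degree_eq_natDegree hp0, degree_eq_natDegree hc0, natDegree_comp,
            natDegree_X_add_C, mul_one]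
        have hlc : p.leadingCoeff = (p.comp (X + C 1)).leadingCoeff := by
          rw [leadingCoeff_comp (by rw [natDegree_X_add_C]; norm_num),
            leadingCoeff_X_add_C, one_pow, mul_one]
        have h1 : q.degree < p.degree := degree_sub_lt hdeg hp0 hlc
        have h2 : p.degree ≤ n := by
          have hnd : p.natDegree < n + 1 := (natDegree_lt_iff_degree_lt hp0).mpr hp
          rw [degree_eq_natDegree hp0]
          exact_mod_cast Nat.lt_succ_iff.mp hnd
        exact lt_of_lt_of_le h1 h2
    have hihq := ih q hqdeg
    have hqe : ∀ k : ℕ, q.eval (k:ℚ) = p.eval (k:ℚ) - p.eval ((k:ℚ)+1) := by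
      intro k; simp [hq, eval_comp]
    -- transform the target sum
    have key : ∑ k ∈ range (n+2), (-1:ℚ)^k * ((n+1).choose k) * p.eval (k:ℚ)
        = ∑ k ∈ range (n+1), (-1:ℚ)^k * (n.choose k) * q.eval (k:ℚ) := by
      have e1 : ∑ k ∈ range (n+1), (-1:ℚ)^k * (n.choose k) * q.eval (k:ℚ)
          = (∑ k ∈ range (n+1), (-1:ℚ)^k * (n.choose k) * p.eval (k:ℚ))
            + ∑ k ∈ range (n+1), (-1:ℚ)^(k+1) * (n.choose k) * p.eval ((k:ℚ)+1) := by
        rw [← sum_add_distrib]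
        apply sum_congr rfl
        intro k _
        rw [hqe k]; ring
      have e2 : ∑ k ∈ range (n+1), (-1:ℚ)^k * (n.choose k) * p.eval (k:ℚ)
          = ∑ k ∈ range (n+2), (-1:ℚ)^k * (n.choose k) * p.eval (k:ℚ) := by
        rw [sum_range_succ (n := n+1)]
        simp [Nat.choose_succ_self]
      have e3 : ∑ k ∈ range (n+2), (-1:ℚ)^k * (n.choose k) * p.eval (k:ℚ)
          = (∑ k ∈ range (n+1), (-1:ℚ)^(k+1) * (n.choose (k+1)) * p.eval ((k:ℚ)+1)) + p.eval 0 := by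
        rw [sum_range_succ' (fun k => (-1:ℚ)^k * (n.choose k) * p.eval (k:ℚ)) (n+1)]
        simp
      rw [e1, e2, e3]
      rw [sum_range_succ' (fun k => (-1:ℚ)^k * ((n+1).choose k) * p.eval (k:ℚ)) (n+1)]
      have hsplit : ∑ k ∈ range (n+1), (-1:ℚ)^(k+1) * (((n+1).choose (k+1) : ℕ)) * p.eval (((k+1:ℕ)):ℚ)
          = ∑ k ∈ range (n+1), ((-1:ℚ)^(k+1) * (n.choose (k+1)) * p.eval ((k:ℚ)+1)
            + (-1:ℚ)^(k+1) * (n.choose k) * p.eval ((k:ℚ)+1)) := by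
        refine sum_congr rfl fun k _ => ?_
        rw [Nat.choose_succ_succ]
        push_cast
        ring
      rw [hsplit, sum_add_distrib]
      simp only [Nat.choose_zero_right, Nat.cast_one, Nat.cast_zero, pow_zero, one_mul]
      ring
    rw [show n + 1 + 1 = n + 2 from rfl, key, hihq]



lemma choose_aux {n k : ℕ} (h : k ≤ n) :
    (n + 1 - k) * (n + 1).choose k = (n + 1) * n.choose k := by
  have h1 : (n + 1).choose k = (n + 1).choose (n + 1 - k) := (Nat.choose_symm (by omega)).symm
  have h2 : (n + 1) * n.choose (n - k) = (n + 1).choose (n - k + 1) * (n - k + 1) :=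
    Nat.add_one_mul_choose_eq n (n - k)
  have h3 : n.choose (n - k) = n.choose k := Nat.choose_symm h
  have h4 : n - k + 1 = n + 1 - k := by omega
  rw [h1, ← h4, ← h3, h2, Nat.mul_comm]

lemma neg_one_pow_sub {n k : ℕ} (h : k ≤ n) :
    (-1:ℚ)^(n-k) = (-1)^n * (-1)^k := by
  rw [neg_one_pow_eq_pow_mod_two (n := n-k), show (n-k) % 2 = (n+k) % 2 by omega,
    ← neg_one_pow_eq_pow_mod_two, pow_add]

lemma abel_poly (n : ℕ) :
    ∑ k ∈ range (n+1), C ((n.choose k * (k+1)^(k-1) : ℕ) : ℚ) *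
      (X + C ((n-k : ℕ) : ℚ)) ^ (n-k)
    = (X + C ((n+1 : ℕ) : ℚ)) ^ n := by
  induction n with
  | zero => simp
  | succ n ih =>
    -- composed induction hypothesis
    have ihc : ∑ k ∈ range (n+1), C ((n.choose k * (k+1)^(k-1) : ℕ) : ℚ) *
        (X + C ((n+1-k : ℕ) : ℚ)) ^ (n-k) = (X + C ((n+2 : ℕ) : ℚ)) ^ n := by
      have h := congrArg (Polynomial.aeval (X + C 1 : ℚ[X])) ih
      simp only [map_sum, map_mul, map_pow, map_add, aeval_X, aeval_C,
        algebraMap_eq] at h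
      calc ∑ k ∈ range (n+1), C ((n.choose k * (k+1)^(k-1) : ℕ) : ℚ) *
            (X + C ((n+1-k : ℕ) : ℚ)) ^ (n-k)
          = ∑ k ∈ range (n+1), C ((n.choose k * (k+1)^(k-1) : ℕ) : ℚ) *
            (X + C 1 + C ((n-k : ℕ) : ℚ)) ^ (n-k) := by
            refine sum_congr rfl fun k hk => ?_
            have hk' : k ≤ n := by simpa [Nat.lt_succ_iff] using hk
            have : ((n+1-k : ℕ) : ℚ) = ((n-k : ℕ) : ℚ) + 1 := by
              have : n+1-k = (n-k)+1 := by omega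
              rw [this]; push_cast; ring
            rw [this, C_add, C_1]; ring
        _ = (X + C 1 + C ((n+1 : ℕ) : ℚ)) ^ n := h
        _ = (X + C ((n+2 : ℕ) : ℚ)) ^ n := by
            rw [add_assoc, ← C_add]
            congr 2
            push_cast
            ring_nf
    apply eq_of_deriv_eq (c := -((n:ℚ)+2))
    · -- derivatives agree
      have dR : derivative ((X + C ((n+1+1 : ℕ) : ℚ)) ^ (n+1))
          = C ((n+1 : ℕ) : ℚ) * (X + C ((n+2 : ℕ) : ℚ)) ^ n := by
        rw [derivative_pow, derivative_X_add_C, mul_one, Nat.add_sub_cancel]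
      rw [dR, derivative_sum]
      have dterm : ∀ k ∈ range (n+2),
          derivative (C (((n+1).choose k * (k+1)^(k-1) : ℕ) : ℚ) *
            (X + C ((n+1-k : ℕ) : ℚ)) ^ (n+1-k))
          = C (((n+1-k) * ((n+1).choose k * (k+1)^(k-1)) : ℕ) : ℚ) *
            (X + C ((n+1-k : ℕ) : ℚ)) ^ (n+1-k-1) := by
        intro k _
        rw [derivative_C_mul, derivative_pow, derivative_X_add_C, mul_one]
        simp only [Nat.cast_mul, C_mul]
        ring
      rw [sum_congr rfl dterm]
      rw [sum_range_succ]
      simp only [Nat.sub_self, Nat.zero_mul, Nat.cast_zero, map_zero, zero_mul, add_zero]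
      calc ∑ k ∈ range (n+1), C (((n+1-k) * ((n+1).choose k * (k+1)^(k-1)) : ℕ) : ℚ) *
            (X + C ((n+1-k : ℕ) : ℚ)) ^ (n+1-k-1)
          = C ((n+1 : ℕ) : ℚ) * ∑ k ∈ range (n+1),
              C ((n.choose k * (k+1)^(k-1) : ℕ) : ℚ) * (X + C ((n+1-k : ℕ) : ℚ)) ^ (n-k) := by
            rw [mul_sum]
            refine sum_congr rfl fun k hk => ?_
            have hk' : k ≤ n := by simpa [Nat.lt_succ_iff] using hk
            have he : n+1-k-1 = n-k := by omega
            have hc : (n+1-k) * ((n+1).choose k * (k+1)^(k-1))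
                = (n+1) * (n.choose k * (k+1)^(k-1)) := by
              rw [← Nat.mul_assoc, choose_aux hk', Nat.mul_assoc]
            rw [he, hc]
            simp only [Nat.cast_mul, C_mul]
            ring
        _ = C ((n+1 : ℕ) : ℚ) * (X + C ((n+2 : ℕ) : ℚ)) ^ n := by rw [ihc]
        _ = C ((n+1 : ℕ) : ℚ) * (X + C ((n+1+1 : ℕ) : ℚ)) ^ n := rfl
    · -- values at -(n+2) agree
      have hR : ((X + C ((n+1+1 : ℕ) : ℚ)) ^ (n+1)).eval (-((n:ℚ)+2)) = 0 := by
        simp only [eval_pow, eval_add, eval_X, eval_C]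
        have h0 : -((n:ℚ)+2) + ((n+1+1 : ℕ) : ℚ) = 0 := by push_cast; ring
        rw [h0, zero_pow (Nat.succ_ne_zero n)]
      rw [hR, eval_finset_sum]
      have hterm : ∀ k ∈ range (n+2),
          (C (((n+1).choose k * (k+1)^(k-1) : ℕ) : ℚ) *
            (X + C ((n+1-k : ℕ) : ℚ)) ^ (n+1-k)).eval (-((n:ℚ)+2))
          = (-1:ℚ)^(n+1) * ((-1:ℚ)^k * ((n+1).choose k : ℚ) *
              (((X + C 1 : ℚ[X])) ^ n).eval (k:ℚ)) := by
        intro k hk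
        have hk' : k ≤ n+1 := by simpa [Nat.lt_succ_iff] using hk
        simp only [eval_mul, eval_pow, eval_add, eval_X, eval_C, eval_one]
        have hbase : -((n:ℚ)+2) + ((n+1-k : ℕ) : ℚ) = -(((k:ℚ))+1) := by
          have : ((n+1-k : ℕ) : ℚ) = (n:ℚ) + 1 - k := by
            have : (n+1-k) + k = n+1 := by omega
            have := congrArg (fun m : ℕ => (m:ℚ)) this
            push_cast at this
            linarith
          rw [this]; ring
        rw [hbase]
        have hneg : (-(((k:ℚ))+1))^(n+1-k) = (-1:ℚ)^(n+1-k) * ((k:ℚ)+1)^(n+1-k) := by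
          rw [← neg_one_mul, mul_pow]
        have hsign := neg_one_pow_sub (n := n+1) (k := k) hk'
        have hpow : ((k:ℚ)+1)^(k-1) * ((k:ℚ)+1)^(n+1-k) = ((k:ℚ)+1)^n := by
          rcases Nat.eq_zero_or_pos k with rfl | hkpos
          · simp
          · rw [← pow_add, show k - 1 + (n+1-k) = n by omega]
        push_cast
        rw [hneg, hsign]
        calc ((n+1).choose k : ℚ) * ((k:ℚ)+1)^(k-1) * ((-1:ℚ)^(n+1) * (-1:ℚ)^k * ((k:ℚ)+1)^(n+1-k))
            = (-1:ℚ)^(n+1) * ((-1:ℚ)^k * ((n+1).choose k : ℚ) *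
                (((k:ℚ)+1)^(k-1) * ((k:ℚ)+1)^(n+1-k))) := by ring
          _ = _ := by rw [hpow]
      rw [sum_congr rfl hterm, ← mul_sum]
      have hdeg : ((X + C 1 : ℚ[X]) ^ n).degree < ((n+1 : ℕ) : WithBot ℕ) := by
        refine lt_of_le_of_lt (degree_pow_le _ _) ?_
        rw [degree_X_add_C, nsmul_eq_mul, mul_one]
        exact_mod_cast Nat.lt_succ_self n
      rw [findiff (n+1) _ hdeg, mul_zero]



lemma abel_sum' (n : ℕ) :
    ∑ k ∈ range (n+1), ((n.choose k : ℕ) : ℚ) * (((k:ℚ))+1)^k * (((n-k+1)^(n-k-1) : ℕ) : ℚ)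
    = ((n:ℚ)+2)^n := by
  have h := congrArg (Polynomial.eval (1:ℚ)) (abel_poly n)
  simp only [eval_finset_sum, eval_mul, eval_pow, eval_add, eval_X, eval_C] at h
  rw [← Finset.sum_range_reflect] at h
  calc ∑ k ∈ range (n+1), ((n.choose k : ℕ) : ℚ) * (((k:ℚ))+1)^k * (((n-k+1)^(n-k-1) : ℕ) : ℚ)
      = ∑ j ∈ range (n+1), ((n.choose (n+1-1-j) * ((n+1-1-j)+1)^((n+1-1-j)-1) : ℕ) : ℚ) *
          ((1:ℚ) + ((n-(n+1-1-j) : ℕ) : ℚ))^(n-(n+1-1-j)) := by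
        refine sum_congr rfl fun j hj => ?_
        have hj' : j ≤ n := by simpa [Nat.lt_succ_iff] using hj
        rw [show n+1-1-j = n-j by omega, show n - (n-j) = j by omega,
          Nat.choose_symm hj']
        push_cast
        ring
    _ = (1 + ((n+1 : ℕ) : ℚ))^n := h
    _ = ((n:ℚ)+2)^n := by push_cast; ring

end AbelIdentity

open PowerSeries

/-- Composition `F(g)` of formal power series, valid (i.e., agreeing with the usual
substitution) whenever the constant term of `g` is zero: the `n`-th coefficient only
depends on `(coeff k F) • g ^ k` for `k ≤ n`, since `g ^ k` then has order `≥ k`. -/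
noncomputable def seriesComp (F g : PowerSeries ℚ) : PowerSeries ℚ :=
  PowerSeries.mk fun n =>
    PowerSeries.coeff (R := ℚ) n (∑ k ∈ Finset.range (n + 1), PowerSeries.coeff (R := ℚ) k F • g ^ k)

/-- The exponential generating series of parking functions,
`F(t) = Σ_{n ≥ 0} (n+1)^(n-1) · t^n / n!` (with constant term 1). -/
noncomputable def parkingEGF : PowerSeries ℚ :=
  PowerSeries.mk fun n => ((n + 1) ^ (n - 1) : ℕ) / (n.factorial : ℚ)

section PS
open Finset


local notation "F" => parkingEGF
local notation "g" => (PowerSeries.X * parkingEGF : PowerSeries ℚ)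
local notation "E" => seriesComp (PowerSeries.exp ℚ) (PowerSeries.X * parkingEGF)
local notation "S" => fun N => ∑ k ∈ range N, PowerSeries.coeff (R := ℚ) k (PowerSeries.exp ℚ) • (PowerSeries.X * parkingEGF) ^ k

lemma coeff_g_pow {k n : ℕ} (h : n < k) : coeff (R := ℚ) n ((PowerSeries.X * parkingEGF) ^ k) = 0 := by
  have hdvd : (PowerSeries.X : PowerSeries ℚ) ^ k ∣ (PowerSeries.X * parkingEGF) ^ k :=
    ⟨parkingEGF ^ k, by rw [mul_pow]⟩
  exact (PowerSeries.X_pow_dvd_iff.mp hdvd) n h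

lemma coeff_E {n N : ℕ} (h : n < N) : coeff (R := ℚ) n E = coeff (R := ℚ) n (S N) := by
  have key : ∀ M : ℕ, n < M → coeff (R := ℚ) n (S M) = ∑ k ∈ range (n+1), coeff (R := ℚ) k (exp ℚ) * coeff (R := ℚ) n ((PowerSeries.X * parkingEGF) ^ k) := by
    intro M hM
    rw [map_sum]
    rw [← Finset.sum_subset (Finset.range_subset_range.mpr hM)]
    · exact Finset.sum_congr rfl fun k _ => by rw [coeff_smul, smul_eq_mul]
    · intro k _ hk
      rw [coeff_smul, smul_eq_mul, coeff_g_pow (by simpa using hk), mul_zero]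
  rw [seriesComp, coeff_mk, key (n+1) (Nat.lt_succ_self n), key N h]

lemma dS (n : ℕ) : d⁄dX ℚ (S (n+2)) = d⁄dX ℚ (PowerSeries.X * parkingEGF) * S (n+1) := by
  rw [map_sum]
  rw [Finset.sum_range_succ' (fun k => d⁄dX ℚ (coeff (R := ℚ) k (exp ℚ) • (PowerSeries.X * parkingEGF) ^ k)) (n+1)]
  simp only [pow_zero, Derivation.map_smul, Derivation.map_one_eq_zero, smul_zero, add_zero]
  rw [Finset.mul_sum]
  refine Finset.sum_congr rfl fun k _ => ?_
  rw [Derivation.leibniz_pow, Nat.add_sub_cancel, coeff_exp, coeff_exp]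
  simp only [Algebra.algebraMap_self, RingHom.id_apply]
  rw [← Nat.cast_smul_eq_nsmul ℚ, smul_smul, smul_eq_mul, mul_smul_comm]
  have hc : (1 / (((k+1).factorial : ℕ) : ℚ)) * ((k+1 : ℕ) : ℚ)
      = 1 / ((k.factorial : ℕ) : ℚ) := by
    rw [Nat.factorial_succ]
    push_cast
    have h1 : ((k.factorial : ℕ) : ℚ) ≠ 0 := by exact_mod_cast k.factorial_ne_zero
    field_simp
  push_cast at hc ⊢
  rw [hc, mul_comm ((X * parkingEGF : PowerSeries ℚ) ^ k)]


lemma dE : d⁄dX ℚ E = d⁄dX ℚ (PowerSeries.X * parkingEGF) * E := by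
  ext n
  rw [PowerSeries.coeff_derivative, coeff_E (Nat.lt_succ_self (n+1)), ← PowerSeries.coeff_derivative, dS n,
    PowerSeries.coeff_mul, PowerSeries.coeff_mul]
  refine Finset.sum_congr rfl fun p hp => ?_
  have hp2 : p.2 ≤ n := by
    have := Finset.HasAntidiagonal.mem_antidiagonal.mp hp
    omega
  rw [coeff_E (Nat.lt_succ_of_le hp2)]

lemma hdg : ∀ k : ℕ, coeff (R := ℚ) k (d⁄dX ℚ (PowerSeries.X * parkingEGF))
    = coeff (R := ℚ) k parkingEGF * ((k:ℚ)+1) := by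
  intro k
  rw [PowerSeries.coeff_derivative, PowerSeries.coeff_succ_X_mul]

lemma dF : d⁄dX ℚ parkingEGF = d⁄dX ℚ (PowerSeries.X * parkingEGF) * parkingEGF := by
  ext n
  rw [PowerSeries.coeff_derivative, PowerSeries.coeff_mul,
    Finset.Nat.sum_antidiagonal_eq_sum_range_succ_mk]
  simp only [hdg]
  simp only [parkingEGF, coeff_mk]
  have hfn : ∀ m : ℕ, ((m.factorial : ℕ) : ℚ) ≠ 0 := fun m => by
    exact_mod_cast m.factorial_ne_zero
  have hL : ((((n+1) + 1) ^ ((n+1) - 1) : ℕ) : ℚ) / ((n+1).factorial : ℚ) * ((n:ℚ)+1)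
      = ((n:ℚ)+2)^n / (n.factorial : ℚ) := by
    rw [Nat.add_sub_cancel, Nat.factorial_succ]
    push_cast
    field_simp
    ring
  rw [hL]
  have hterm : ∀ k ∈ Finset.range (n+1),
      (((k + 1) ^ (k - 1) : ℕ) : ℚ) / (k.factorial : ℚ) * ((k:ℚ)+1) *
        ((((n - k + 1) ^ (n - k - 1) : ℕ) : ℚ) / ((n-k).factorial : ℚ))
      = ((n.choose k : ℕ) : ℚ) * (((k:ℚ))+1)^k * (((n-k+1)^(n-k-1) : ℕ) : ℚ)
          / (n.factorial : ℚ) := by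
    intro k hk
    have hk' : k ≤ n := by simpa [Nat.lt_succ_iff] using hk
    have hp : (((k+1)^(k-1) : ℕ) : ℚ) * ((k:ℚ)+1) = ((k:ℚ)+1)^k := by
      cases k with
      | zero => norm_num
      | succ m =>
        push_cast [Nat.add_sub_cancel]
        rw [← pow_succ]
    have hch : ((n.choose k : ℕ) : ℚ) * (k.factorial : ℚ) * ((n-k).factorial : ℚ)
        = (n.factorial : ℚ) := by
      exact_mod_cast congrArg (fun m : ℕ => (m : ℚ))
        (Nat.choose_mul_factorial_mul_factorial hk')
    rw [div_mul_eq_mul_div, div_mul_div_comm,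
      div_eq_div_iff (mul_ne_zero (hfn k) (hfn (n-k))) (hfn n)]
    linear_combination ((((n-k+1)^(n-k-1) : ℕ) : ℚ) * (n.factorial : ℚ)) * hp
      - (((k:ℚ)+1)^k * (((n-k+1)^(n-k-1) : ℕ) : ℚ)) * hch
  rw [Finset.sum_congr rfl hterm]
  rw [← Finset.sum_div]
  rw [abel_sum' n]

lemma coeff_eq : ∀ n, coeff (R := ℚ) n E = coeff (R := ℚ) n parkingEGF := by
  intro n
  induction n using Nat.strong_induction_on with
  | _ n ih =>
    match n with
    | 0 =>
      rw [coeff_E (Nat.lt_succ_self 0)]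
      simp [parkingEGF]
    | (n+1) =>
      have h1 : coeff (R := ℚ) n (d⁄dX ℚ E) = coeff (R := ℚ) n (d⁄dX ℚ parkingEGF) := by
        rw [dE, dF, PowerSeries.coeff_mul, PowerSeries.coeff_mul]
        refine Finset.sum_congr rfl fun p hp => ?_
        have hp2 : p.2 ≤ n := by
          have := Finset.HasAntidiagonal.mem_antidiagonal.mp hp
          omega
        rw [ih p.2 (by omega)]
      rw [PowerSeries.coeff_derivative, PowerSeries.coeff_derivative] at h1
      have hne : ((n:ℚ)+1) ≠ 0 := by positivity
      exact mul_right_cancel₀ hne h1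


end PS

/-- `F(t) = exp (t · F(t))` in `ℚ⟦t⟧`. -/
theorem parkingEGF_eq_exp_comp :
    parkingEGF = seriesComp (PowerSeries.exp ℚ) (PowerSeries.X * parkingEGF) :=
  PowerSeries.ext fun n => (coeff_eq n).symm
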